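/- Let c ∈ (0, 1], a ∈ ℝ with |a| < 1, and x ∈ ℝ, and define f : ℝ → ℝ by f(h) = (1 − c)·h + c·tanh(x + a·h). Then f is a contraction: for all h, h' ∈ ℝ, |f(h) − f(h')| ≤ (1 − c·(1 − |a|))·|h − h'|, with contraction constant 1 − c·(1 − |a|) < 1. Consequently f has a unique fixed point h*, and for every initial condition h₀ the iterates f^[n](h₀) converge to h* with |f^[n](h₀) − h*| ≤ (1 − c·(1 − |a|))^n·|h₀ − h*|. Hence for |a| < 1 the unit is monostable and has only fading memory. -/

import Mathlib

lemma tanh_hasDerivAt (y : ℝ) :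
    HasDerivAt Real.tanh (1 / Real.cosh y ^ 2) y := by
  have h := (Real.hasDerivAt_sinh y).div (Real.hasDerivAt_cosh y) (Real.cosh_pos y).ne'
  have heq : (Real.cosh y * Real.cosh y - Real.sinh y * Real.sinh y) / Real.cosh y ^ 2
      = 1 / Real.cosh y ^ 2 := by
    rw [← sq, ← sq, Real.cosh_sq_sub_sinh_sq]
  have hfun : (fun t => Real.sinh t / Real.cosh t) = Real.tanh := by
    funext t; rw [Real.tanh_eq_sinh_div_cosh]
  rw [heq, show (Real.sinh / Real.cosh) = Real.tanh from funext fun t => (Real.tanh_eq_sinh_div_cosh t).symm] at h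
  exact h

lemma tanh_lipschitz (u v : ℝ) : |Real.tanh u - Real.tanh v| ≤ |u - v| := by
  have := Convex.norm_image_sub_le_of_norm_hasDerivWithin_le
    (f := Real.tanh) (f' := fun y => 1 / Real.cosh y ^ 2) (s := Set.univ) (C := 1)
    (fun y _ => (tanh_hasDerivAt y).hasDerivWithinAt)
    (fun y _ => by
      rw [Real.norm_eq_abs, abs_of_nonneg (by positivity)]
      rw [div_le_one (by positivity)]
      nlinarith [Real.one_le_cosh y])
    convex_univ (Set.mem_univ v) (Set.mem_univ u)
  simpa [Real.norm_eq_abs] using this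

theorem monostable_contraction (c a x : ℝ) (hc0 : 0 < c) (hc1 : c ≤ 1) (ha : |a| < 1)
    (f : ℝ → ℝ) (hf : ∀ h, f h = (1 - c) * h + c * Real.tanh (x + a * h)) :
    (∀ h h', |f h - f h'| ≤ (1 - c * (1 - |a|)) * |h - h'|) ∧
    (1 - c * (1 - |a|) < 1) ∧
    (∃ hstar : ℝ, f hstar = hstar ∧ (∀ h', f h' = h' → h' = hstar) ∧
      ∀ h0 n, |f^[n] h0 - hstar| ≤ (1 - c * (1 - |a|)) ^ n * |h0 - hstar|) := by
  set K : ℝ := 1 - c * (1 - |a|) with hK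
  have ha0 : 0 ≤ |a| := abs_nonneg a
  have hK0 : 0 ≤ K := by nlinarith
  have hK1 : K < 1 := by nlinarith
  have hcontr : ∀ h h', |f h - f h'| ≤ K * |h - h'| := by
    intro h h'
    rw [hf h, hf h']
    have key : (1 - c) * h + c * Real.tanh (x + a * h)
        - ((1 - c) * h' + c * Real.tanh (x + a * h'))
        = (1 - c) * (h - h') + c * (Real.tanh (x + a * h) - Real.tanh (x + a * h')) := by ring
    rw [key]
    calc |(1 - c) * (h - h') + c * (Real.tanh (x + a * h) - Real.tanh (x + a * h'))|
        ≤ |(1 - c) * (h - h')| + |c * (Real.tanh (x + a * h) - Real.tanh (x + a * h'))| :=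
          abs_add_le _ _
      _ = (1 - c) * |h - h'| + c * |Real.tanh (x + a * h) - Real.tanh (x + a * h')| := by
          rw [abs_mul, abs_mul, abs_of_nonneg (by linarith), abs_of_nonneg hc0.le]
      _ ≤ (1 - c) * |h - h'| + c * (|a| * |h - h'|) := by
          have := tanh_lipschitz (x + a * h) (x + a * h')
          have h2 : |x + a * h - (x + a * h')| = |a| * |h - h'| := by
            rw [show x + a * h - (x + a * h') = a * (h - h') by ring, abs_mul]
          rw [h2] at this
          nlinarith
      _ = K * |h - h'| := by ring
  refine ⟨hcontr, hK1, ?_⟩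
  -- existence of fixed point via Banach
  have hKnn : (⟨K, hK0⟩ : NNReal) < 1 := by
    exact (NNReal.coe_lt_one (r := ⟨K, hK0⟩)).mp hK1
  have hlip : LipschitzWith ⟨K, hK0⟩ f :=
    LipschitzWith.of_dist_le_mul fun p q => by
      rw [Real.dist_eq, Real.dist_eq]; exact hcontr p q
  have hC : ContractingWith ⟨K, hK0⟩ f := ⟨hKnn, hlip⟩
  obtain ⟨hstar, hfix⟩ := hC.exists_fixedPoint 0 (by simp [edist_dist])
  refine ⟨hstar, hfix.1, ?_, ?_⟩
  · intro h' hh'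
    have := hcontr h' hstar
    rw [hh', hfix.1] at this
    by_contra hne
    have : 0 < |h' - hstar| := abs_pos.mpr (sub_ne_zero.mpr hne)
    nlinarith [hcontr h' hstar, hfix.1, hh']
  · intro h0 n
    induction n with
    | zero => simp
    | succ n ih =>
      rw [Function.iterate_succ_apply']
      calc |f (f^[n] h0) - hstar| = |f (f^[n] h0) - f hstar| := by rw [hfix.1]
        _ ≤ K * |f^[n] h0 - hstar| := hcontr _ _
        _ ≤ K * (K ^ n * |h0 - hstar|) := by
            exact mul_le_mul_of_nonneg_left ih hK0
        _ = K ^ (n + 1) * |h0 - hstar| := by ring
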